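/- For every k ≥ 2, if ρ is the order-reversing permutation of {1,…,k}, i.e. ρ(i) = k + 1 − i for all i, then π_conc(ρ) is the identity permutation. (Hence the lexicographic order of the input strings is always a feasible output order for the concatenated BWT, achieved by presenting the strings in reverse lexicographic rank order.) -/
import Mathlib

/-- The linking permutation `Φ_ρ` (0-indexed, addition modulo `k`). -/
def linkPerm {k : ℕ} (ρ : Equiv.Perm (Fin (k + 2))) (i : Fin (k + 2)) : Fin (k + 2) :=
  ρ (ρ.symm i + 1)

/-- `f_j(i)`, for `i ≠ j`: the rank of `i` in `{0,…,k−1} \ {j}` (0-indexed). -/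
def rankAvoid {k : ℕ} (j i : Fin (k + 2)) : ℕ := if i < j then i else i - 1

/-- For every `k ≥ 2`, if `ρ` is the order-reversing permutation of
`{1,…,k}` (0-indexed: `ρ(i) = i.rev`), then the identity permutation satisfies the
defining properties of `π_conc(ρ)`, i.e. `π_conc(ρ)` is the identity.  (Hence the
lexicographic order of the input strings is always feasible for the concatenated BWT,
achieved by presenting the strings in reverse lexicographic rank order.) -/
theorem piConc_of_rev_eq_id (k : ℕ) (ρ : Equiv.Perm (Fin (k + 2)))
    (hρ : ∀ i, ρ i = i.rev) :
    (Equiv.refl (Fin (k + 2))) 0 = ρ (Fin.last (k + 1)) ∧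
    ∀ i, i ≠ ρ (Fin.last (k + 1)) →
      (((Equiv.refl (Fin (k + 2))).symm i : ℕ) =
        rankAvoid (ρ 0) (linkPerm ρ i) + 1) := by
  have hsymm : ∀ i, ρ.symm i = i.rev := by
    intro i
    apply ρ.injective
    rw [Equiv.apply_symm_apply, hρ, Fin.rev_rev]
  have hlast : ρ (Fin.last (k + 1)) = 0 := by
    rw [hρ]; ext; simp [Fin.val_rev]
  constructor
  · simp [hlast]
  · intro i hi
    rw [hlast] at hi
    have hi0 : 1 ≤ (i : ℕ) := by
      exact Nat.pos_of_ne_zero fun h => hi (Fin.ext h)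
    have hile : (i : ℕ) ≤ k + 1 := Nat.lt_succ_iff.mp i.isLt
    simp only [Equiv.refl_symm, Equiv.refl_apply, linkPerm, hsymm, hρ, rankAvoid]
    have hlt : i.rev < Fin.last (k + 1) := by
      rw [Fin.lt_iff_val_lt_val, Fin.val_rev, Fin.val_last]; omega
    have h1 : ((i.rev + 1 : Fin (k + 2)) : ℕ) = k + 2 - (i : ℕ) := by
      rw [Fin.val_add_one_of_lt hlt, Fin.val_rev]; omega
    have h2 : ((i.rev + 1).rev : ℕ) = (i : ℕ) - 1 := by
      rw [Fin.val_rev, h1]; omega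
    have h3 : (i.rev + 1).rev < (0 : Fin (k + 2)).rev := by
      rw [Fin.lt_iff_val_lt_val, h2, Fin.val_rev]
      simp; omega
    rw [if_pos h3, h2]; omega
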